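/- Let L be a Moufang loop of class at most 2 (every commutator and associator of L lies in the center Z(L)). Then for all c, d, e, f ∈ L the pentagonal (five-cycle) identity holds: [cd,e,f] = [c,d,e]·[c,de,f]·[d,e,f]·[c,d,ef]⁻¹. -/
import Mathlib


/-- An inverse property loop: a set with multiplication, identity, and two-sided
inverses satisfying `a⁻¹(ax) = x = (xa)a⁻¹`. -/
class IPLoop (L : Type*) extends Mul L, One L, Inv L where
  one_mul : ∀ a : L, 1 * a = a
  mul_one : ∀ a : L, a * 1 = a
  inv_mul_cancel_left : ∀ a x : L, a⁻¹ * (a * x) = x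
  mul_inv_cancel_right : ∀ a x : L, (x * a) * a⁻¹ = x

namespace IPLoop

variable {L : Type*} [IPLoop L]

/-- Powers with natural number exponent, `c^(n+1) = c * c^n`. -/
def npow (c : L) : ℕ → L
  | 0 => 1
  | n + 1 => c * npow c n

instance : Pow L ℕ := ⟨npow⟩

/-- Powers with integer exponent. -/
def zpow (c : L) : ℤ → L
  | Int.ofNat n => c ^ n
  | Int.negSucc n => (c ^ (n + 1))⁻¹

instance : Pow L ℤ := ⟨zpow⟩

/-- The commutator `[c,d] = (dc)⁻¹(cd)`. -/
def comm (c d : L) : L := (d * c)⁻¹ * (c * d)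

/-- The associator `[c,d,e] = (c(de))⁻¹((cd)e)`. -/
def assoc (c d e : L) : L := (c * (d * e))⁻¹ * ((c * d) * e)

/-- Membership in the center `Z(L)`. -/
def inCenter (z : L) : Prop :=
  (∀ x : L, comm z x = 1) ∧
  ∀ x y : L, assoc z x y = 1 ∧ assoc x z y = 1 ∧ assoc x y z = 1

/-- The Moufang identity `((dc)e)c = d(c(ec))`. -/
def IsMoufang (L : Type*) [IPLoop L] : Prop :=
  ∀ c d e : L, ((d * c) * e) * c = d * (c * (e * c))

/-- A loop is of (central nilpotence) class at most 2 if every commutator and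
every associator lies in the center. -/
def ClassTwo (L : Type*) [IPLoop L] : Prop :=
  (∀ c d : L, inCenter (comm c d)) ∧ ∀ c d e : L, inCenter (assoc c d e)

/-- The order of an element: least `n > 0` with `c^n = 1` (or `0` if none). -/
noncomputable def ordOf (c : L) : ℕ := sInf {n : ℕ | 0 < n ∧ c ^ n = 1}

/-- The subloop generated by a subset `S`. -/
def subloopClosure (S : Set L) : Set L :=
  ⋂₀ {T : Set L | (1 : L) ∈ T ∧ (∀ x ∈ T, x⁻¹ ∈ T) ∧
      (∀ x ∈ T, ∀ y ∈ T, x * y ∈ T) ∧ S ⊆ T}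

end IPLoop

namespace IPLoop

variable {L' : Type*} [IPLoop L']

lemma inv_mul' (a : L') : a⁻¹ * a = 1 := by
  have h := inv_mul_cancel_left a 1
  rwa [IPLoop.mul_one a] at h

lemma mul_inv' (a : L') : a * a⁻¹ = 1 := by
  have h := mul_inv_cancel_right a (1 : L')
  rwa [IPLoop.one_mul a] at h

lemma inv_inv' (a : L') : a⁻¹⁻¹ = a := by
  have h := inv_mul_cancel_left a⁻¹ a
  rwa [inv_mul', IPLoop.mul_one] at h

lemma mul_inv_cancel_left' (a b : L') : a * (a⁻¹ * b) = b := by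
  have h := inv_mul_cancel_left a⁻¹ b
  rwa [inv_inv'] at h

lemma left_cancel' {a x y : L'} (h : a * x = a * y) : x = y := by
  have h2 : a⁻¹ * (a * x) = a⁻¹ * (a * y) := by rw [h]
  rwa [inv_mul_cancel_left, inv_mul_cancel_left] at h2

lemma right_cancel' {a x y : L'} (h : x * a = y * a) : x = y := by
  have h2 : (x * a) * a⁻¹ = (y * a) * a⁻¹ := by rw [h]
  rwa [mul_inv_cancel_right, mul_inv_cancel_right] at h2

lemma comm_eq_one {z x : L'} (h : comm z x = 1) : z * x = x * z := by
  unfold comm at h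
  apply left_cancel' (a := (x * z)⁻¹)
  rw [h, inv_mul']

lemma assoc_eq_one {x y z : L'} (h : assoc x y z = 1) : (x * y) * z = x * (y * z) := by
  unfold assoc at h
  have := left_cancel' (a := (x * (y * z))⁻¹) (x := (x*y)*z) (y := x*(y*z))
  apply this
  rw [h, inv_mul']

lemma mul_assoc_gen (x y z : L') : (x * y) * z = (x * (y * z)) * assoc x y z := by
  unfold assoc
  rw [mul_inv_cancel_left']

lemma cent_comm {z : L'} (hz : inCenter z) (x : L') : z * x = x * z :=
  comm_eq_one (hz.1 x)

lemma cent_assoc_l {z : L'} (hz : inCenter z) (x y : L') : (z * x) * y = z * (x * y) :=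
  assoc_eq_one (hz.2 x y).1

lemma cent_assoc_m {z : L'} (hz : inCenter z) (x y : L') : (x * z) * y = x * (z * y) :=
  assoc_eq_one (hz.2 x y).2.1

lemma cent_assoc_r {z : L'} (hz : inCenter z) (x y : L') : (x * y) * z = x * (y * z) :=
  assoc_eq_one (hz.2 x y).2.2

lemma cent_slide {z : L'} (hz : inCenter z) (x y : L') : (x * z) * y = (x * y) * z := by
  rw [cent_assoc_m hz, cent_comm hz, ← cent_assoc_r hz]

end IPLoop

open IPLoop in
/-- The pentagonal (five-cycle) identity
`[cd,e,f] = [c,d,e]·[c,de,f]·[d,e,f]·[c,d,ef]⁻¹` in a Moufang loop of class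
at most 2. -/
theorem stmt1 {L : Type*} [IPLoop L] (hM : IsMoufang L) (h2 : ClassTwo L)
    (c d e f : L) :
    assoc (c * d) e f =
      ((assoc c d e * assoc c (d * e) f) * assoc d e f) * (assoc c d (e * f))⁻¹ := by

  set A1 := assoc c d e with hA1def
  set A2 := assoc c (d * e) f with hA2def
  set A3 := assoc d e f with hA3def
  set A5 := assoc (c * d) e f with hA5def
  set A4 := assoc c d (e * f) with hA4def
  have h1 : inCenter A1 := h2.2 c d e
  have h2' : inCenter A2 := h2.2 c (d * e) f
  have h3 : inCenter A3 := h2.2 d e f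
  have h5 : inCenter A5 := h2.2 (c * d) e f
  have h4 : inCenter A4 := h2.2 c d (e * f)
  set X := c * (d * (e * f)) with hXdef
  have lhs : ((c * d) * e) * f = (X * A4) * A5 := by
    rw [mul_assoc_gen (c * d) e f, mul_assoc_gen c d (e * f)]
  have rhs : ((c * d) * e) * f = ((X * A3) * A2) * A1 := by
    calc ((c * d) * e) * f = ((c * (d * e)) * A1) * f := by rw [mul_assoc_gen c d e]
      _ = ((c * (d * e)) * f) * A1 := cent_slide h1 _ _
      _ = ((c * ((d * e) * f)) * A2) * A1 := by rw [mul_assoc_gen c (d * e) f]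
      _ = ((c * ((d * (e * f)) * A3)) * A2) * A1 := by rw [mul_assoc_gen d e f]
      _ = ((X * A3) * A2) * A1 := by rw [← cent_assoc_r h3 c (d * (e * f))]
  have E : X * (A4 * A5) = X * ((A3 * A2) * A1) := by
    rw [← cent_assoc_m h4, ← lhs, rhs, cent_assoc_m h3 X A2, cent_assoc_r h1]
  have E2 : A4 * A5 = (A3 * A2) * A1 := left_cancel' E
  apply right_cancel' (a := A4)
  have hr : (((A1 * A2) * A3) * A4⁻¹) * A4 = (A1 * A2) * A3 := by
    have h := mul_inv_cancel_right (A4⁻¹) ((A1 * A2) * A3)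
    rwa [inv_inv'] at h
  rw [hr]
  calc A5 * A4 = A4 * A5 := (cent_comm h4 A5).symm
    _ = (A3 * A2) * A1 := E2
    _ = A1 * (A3 * A2) := (cent_comm h1 _).symm
    _ = A1 * (A2 * A3) := by rw [cent_comm h3 A2]
    _ = (A1 * A2) * A3 := (cent_assoc_r h3 A1 A2).symm
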